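/- Covariance simplification under the null hypothesis in the AR-ARCH model: for all real y and z, Φ(min(y,z)) − Φ(y)Φ(z) + φ(y)·(∫ x·1{x ≤ z} dγ(x) + y·∫ (x² − 1)·1{x ≤ z} dγ(x)) + φ(z)·(∫ x·1{x ≤ y} dγ(x) + z·∫ (x² − 1)·1{x ≤ y} dγ(x)) + φ(y)φ(z)·(1 + (y+z)·∫ x³ dγ(x) + y·z·(∫ x⁴ dγ(x) − 1)) = Φ(min(y,z)) − Φ(y)Φ(z) − φ(y)φ(z). (This identifies the limiting covariance of the residual empirical process in the AR-ARCH model with Gaussian innovations as the covariance Φ(y∧z) − Φ(y)Φ(z) − φ(y)φ(z).) -/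

import Mathlib

open MeasureTheory ProbabilityTheory Real Filter Set Topology

private lemma aux_hE (x : ℝ) :
    HasDerivAt (fun x : ℝ => rexp (-x ^ 2 / 2)) (-x * rexp (-x ^ 2 / 2)) x := by
  have h : HasDerivAt (fun x : ℝ => -x ^ 2 / 2) (-x) x := by
    have := ((hasDerivAt_pow 2 x).neg.div_const 2)
    refine this.congr_deriv ?_
    push_cast
    ring
  have := h.exp
  convert this using 1
  ring

private lemma aux_tend (n : ℕ) :
    Tendsto (fun x : ℝ => x ^ n * rexp (-x ^ 2 / 2)) (cocompact ℝ) (𝓝 0) := by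
  have h := tendsto_rpow_abs_mul_exp_neg_mul_sq_cocompact (one_half_pos) (n : ℝ)
  refine squeeze_zero_norm (fun x => ?_) h
  rw [norm_mul, Real.norm_eq_abs, Real.norm_eq_abs, abs_pow, Real.abs_exp,
    Real.rpow_natCast]
  apply le_of_eq
  congr 1
  ring

private lemma aux_tendBot (n : ℕ) :
    Tendsto (fun x : ℝ => x ^ n * rexp (-x ^ 2 / 2)) atBot (𝓝 0) :=
  (aux_tend n).mono_left _root_.atBot_le_cocompact

private lemma aux_tendTop (n : ℕ) :
    Tendsto (fun x : ℝ => x ^ n * rexp (-x ^ 2 / 2)) atTop (𝓝 0) :=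
  (aux_tend n).mono_left _root_.atTop_le_cocompact

private lemma aux_int (n : ℕ) :
    Integrable (fun x : ℝ => x ^ n * rexp (-x ^ 2 / 2)) := by
  have h := integrable_rpow_mul_exp_neg_mul_sq (b := 1/2) one_half_pos
    (s := (n : ℝ)) (by exact_mod_cast neg_one_lt_zero.trans_le (Nat.cast_nonneg n))
  have he : (fun x : ℝ => x ^ n * rexp (-x ^ 2 / 2))
      = fun x : ℝ => x ^ (n : ℝ) * rexp (-(1/2) * x ^ 2) := by
    funext x
    rw [Real.rpow_natCast]
    congr 1
    ring
  rw [he]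
  exact h

private lemma aux_F1 (z : ℝ) :
    ∫ x in Iic z, x * rexp (-x ^ 2 / 2) = -rexp (-z ^ 2 / 2) := by
  have hd : ∀ x ∈ Iic z, HasDerivAt (fun x : ℝ => -rexp (-x ^ 2 / 2))
      (x * rexp (-x ^ 2 / 2)) x := by
    intro x _
    have := (aux_hE x).neg
    refine this.congr_deriv ?_
    ring
  have hint : IntegrableOn (fun x : ℝ => x * rexp (-x ^ 2 / 2)) (Iic z) := by
    have := aux_int 1
    simpa using this.integrableOn
  have hlim : Tendsto (fun x : ℝ => -rexp (-x ^ 2 / 2)) atBot (𝓝 0) := by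
    have := (aux_tendBot 0).neg
    simpa using this
  rw [integral_Iic_of_hasDerivAt_of_tendsto' hd hint hlim, sub_zero]

private lemma aux_F2 (z : ℝ) :
    ∫ x in Iic z, (x ^ 2 - 1) * rexp (-x ^ 2 / 2) = -(z * rexp (-z ^ 2 / 2)) := by
  have hd : ∀ x ∈ Iic z, HasDerivAt (fun x : ℝ => -(x * rexp (-x ^ 2 / 2)))
      ((x ^ 2 - 1) * rexp (-x ^ 2 / 2)) x := by
    intro x _
    have := ((hasDerivAt_id x).mul (aux_hE x)).neg
    refine this.congr_deriv ?_
    simp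
    ring
  have hint : IntegrableOn (fun x : ℝ => (x ^ 2 - 1) * rexp (-x ^ 2 / 2)) (Iic z) := by
    have := (aux_int 2).sub (aux_int 0)
    have he : (fun x : ℝ => (x ^ 2 - 1) * rexp (-x ^ 2 / 2))
        = fun x : ℝ => x ^ 2 * rexp (-x ^ 2 / 2) - x ^ 0 * rexp (-x ^ 2 / 2) := by
      funext x; ring
    rw [he]
    exact this.integrableOn
  have hlim : Tendsto (fun x : ℝ => -(x * rexp (-x ^ 2 / 2))) atBot (𝓝 0) := by
    have := (aux_tendBot 1).neg
    simpa using this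
  rw [integral_Iic_of_hasDerivAt_of_tendsto' hd hint hlim, sub_zero]

private lemma aux_F3 :
    ∫ x : ℝ, x ^ 3 * rexp (-x ^ 2 / 2) = 0 := by
  have hd : ∀ x : ℝ, HasDerivAt (fun x : ℝ => -((x ^ 2 + 2) * rexp (-x ^ 2 / 2)))
      (x ^ 3 * rexp (-x ^ 2 / 2)) x := by
    intro x
    have := (((hasDerivAt_pow 2 x).add_const 2).mul (aux_hE x)).neg
    refine this.congr_deriv ?_
    push_cast
    ring
  have hbot : Tendsto (fun x : ℝ => -((x ^ 2 + 2) * rexp (-x ^ 2 / 2))) atBot (𝓝 0) := by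
    have := ((aux_tendBot 2).add ((aux_tendBot 0).const_mul 2)).neg
    have he : (fun x : ℝ => -((x ^ 2 + 2) * rexp (-x ^ 2 / 2)))
        = fun x : ℝ => -(x ^ 2 * rexp (-x ^ 2 / 2) + 2 * (x ^ 0 * rexp (-x ^ 2 / 2))) := by
      funext x; ring
    rw [he]
    simpa using this
  have htop : Tendsto (fun x : ℝ => -((x ^ 2 + 2) * rexp (-x ^ 2 / 2))) atTop (𝓝 0) := by
    have := ((aux_tendTop 2).add ((aux_tendTop 0).const_mul 2)).neg
    have he : (fun x : ℝ => -((x ^ 2 + 2) * rexp (-x ^ 2 / 2)))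
        = fun x : ℝ => -(x ^ 2 * rexp (-x ^ 2 / 2) + 2 * (x ^ 0 * rexp (-x ^ 2 / 2))) := by
      funext x; ring
    rw [he]
    simpa using this
  rw [integral_of_hasDerivAt_of_tendsto hd (aux_int 3) hbot htop, sub_zero]

private lemma aux_intE : ∫ x : ℝ, rexp (-x ^ 2 / 2) = Real.sqrt (2 * π) := by
  have h := integral_gaussian (1/2 : ℝ)
  have he : (fun x : ℝ => rexp (-x ^ 2 / 2)) = fun x : ℝ => rexp (-(1/2) * x ^ 2) := by
    funext x; congr 1; ring
  rw [he, h]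
  congr 1
  ring

private lemma aux_F4 :
    ∫ x : ℝ, x ^ 4 * rexp (-x ^ 2 / 2) = 3 * Real.sqrt (2 * π) := by
  have hd : ∀ x : ℝ, HasDerivAt (fun x : ℝ => -((x ^ 3 + 3 * x) * rexp (-x ^ 2 / 2)))
      (x ^ 4 * rexp (-x ^ 2 / 2) - 3 * (x ^ 0 * rexp (-x ^ 2 / 2))) x := by
    intro x
    have := (((hasDerivAt_pow 3 x).add ((hasDerivAt_id x).const_mul 3)).mul (aux_hE x)).neg
    refine this.congr_deriv ?_
    push_cast
    simp
    ring
  have hint : Integrable (fun x : ℝ =>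
      x ^ 4 * rexp (-x ^ 2 / 2) - 3 * (x ^ 0 * rexp (-x ^ 2 / 2))) :=
    (aux_int 4).sub ((aux_int 0).const_mul 3)
  have hbot : Tendsto (fun x : ℝ => -((x ^ 3 + 3 * x) * rexp (-x ^ 2 / 2))) atBot (𝓝 0) := by
    have := ((aux_tendBot 3).add ((aux_tendBot 1).const_mul 3)).neg
    have he : (fun x : ℝ => -((x ^ 3 + 3 * x) * rexp (-x ^ 2 / 2)))
        = fun x : ℝ => -(x ^ 3 * rexp (-x ^ 2 / 2) + 3 * (x ^ 1 * rexp (-x ^ 2 / 2))) := by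
      funext x; ring
    rw [he]
    simpa using this
  have htop : Tendsto (fun x : ℝ => -((x ^ 3 + 3 * x) * rexp (-x ^ 2 / 2))) atTop (𝓝 0) := by
    have := ((aux_tendTop 3).add ((aux_tendTop 1).const_mul 3)).neg
    have he : (fun x : ℝ => -((x ^ 3 + 3 * x) * rexp (-x ^ 2 / 2)))
        = fun x : ℝ => -(x ^ 3 * rexp (-x ^ 2 / 2) + 3 * (x ^ 1 * rexp (-x ^ 2 / 2))) := by
      funext x; ring
    rw [he]
    simpa using this
  have h0 := integral_of_hasDerivAt_of_tendsto hd hint hbot htop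
  rw [sub_zero] at h0
  rw [integral_sub (aux_int 4) ((aux_int 0).const_mul 3), integral_const_mul] at h0
  simp only [pow_zero, one_mul, aux_intE] at h0
  linarith

private lemma aux_conv (f : ℝ → ℝ) {s : Set ℝ} (hs : MeasurableSet s) :
    ∫ x in s, f x ∂(gaussianReal 0 1)
      = (Real.sqrt (2 * π))⁻¹ * ∫ x in s, f x * rexp (-x ^ 2 / 2) := by
  rw [gaussianReal_of_var_ne_zero 0 one_ne_zero]
  have hmeas : Measurable (fun x : ℝ => (gaussianPDFReal 0 1 x).toNNReal) :=
    (measurable_gaussianPDFReal 0 1).real_toNNReal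
  have hpdf : (gaussianPDF 0 1) = fun x => ((gaussianPDFReal 0 1 x).toNNReal : ENNReal) := by
    funext x
    rfl
  rw [hpdf, setIntegral_withDensity_eq_setIntegral_smul hmeas _ hs, ← integral_const_mul]
  refine integral_congr_ae (Filter.Eventually.of_forall fun x => ?_)
  show (gaussianPDFReal 0 1 x).toNNReal • f x = _
  rw [NNReal.smul_def, Real.coe_toNNReal _ (gaussianPDFReal_nonneg 0 1 x), smul_eq_mul]
  simp only [gaussianPDFReal, NNReal.coe_one, mul_one, sub_zero]
  ring

/-- Covariance simplification under the null hypothesis in the AR-ARCH model: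
the limiting covariance of the residual empirical process with Gaussian
innovations equals `Φ(y∧z) - Φ(y)Φ(z) - φ(y)φ(z)`. -/
theorem stmt_2 (φ Φ : ℝ → ℝ)
    (hφ : ∀ x, φ x = (Real.sqrt (2 * π))⁻¹ * Real.exp (-x ^ 2 / 2))
    (hΦ : ∀ y, Φ y = ((gaussianReal 0 1) (Set.Iic y)).toReal) :
    ∀ y z : ℝ,
      Φ (min y z) - Φ y * Φ z
        + φ y * ((∫ x in Set.Iic z, x ∂(gaussianReal 0 1))
            + y * ∫ x in Set.Iic z, (x ^ 2 - 1) ∂(gaussianReal 0 1))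
        + φ z * ((∫ x in Set.Iic y, x ∂(gaussianReal 0 1))
            + z * ∫ x in Set.Iic y, (x ^ 2 - 1) ∂(gaussianReal 0 1))
        + φ y * φ z * (1 + (y + z) * (∫ x, x ^ 3 ∂(gaussianReal 0 1))
            + y * z * ((∫ x, x ^ 4 ∂(gaussianReal 0 1)) - 1))
      = Φ (min y z) - Φ y * Φ z - φ y * φ z := by
  intro y z
  have hc : Real.sqrt (2 * π) ≠ 0 := ne_of_gt (Real.sqrt_pos.mpr (by positivity))
  have e1 : ∀ w : ℝ, (∫ x in Set.Iic w, x ∂(gaussianReal 0 1)) = -φ w := by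
    intro w
    rw [aux_conv (fun x => x) measurableSet_Iic, aux_F1, hφ w]
    ring
  have e2 : ∀ w : ℝ, (∫ x in Set.Iic w, (x ^ 2 - 1) ∂(gaussianReal 0 1)) = -(w * φ w) := by
    intro w
    rw [aux_conv (fun x => x ^ 2 - 1) measurableSet_Iic, aux_F2, hφ w]
    ring
  have e3 : (∫ x, x ^ 3 ∂(gaussianReal 0 1)) = 0 := by
    rw [← setIntegral_univ, aux_conv (fun x => x ^ 3) MeasurableSet.univ,
      setIntegral_univ, aux_F3, mul_zero]
  have e4 : (∫ x, x ^ 4 ∂(gaussianReal 0 1)) = 3 := by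
    rw [← setIntegral_univ, aux_conv (fun x => x ^ 4) MeasurableSet.univ,
      setIntegral_univ, aux_F4]
    field_simp
  rw [e1 y, e1 z, e2 y, e2 z, e3, e4]
  ring
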